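/- Let 𝙰 and 𝙲 be finite sets, φ : 𝙰^G → 𝙲 a continuous map with induced equivariant map Φ : 𝙰^G → 𝙲^G, μ a shift-invariant Borel probability measure on 𝙰^G, and Z ⊆ 𝙰^G a subshift with μ(Z) = 1. Suppose Y = Φ(Z) and Φ restricted to Z is a homeomorphism onto Y. Then f^Z_μ(𝙰^G) = f^Y_μ(φ). -/

import Mathlib

/- Claim (C:restricted_invar): if Φ : 𝙰^G → 𝙲^G is the equivariant map induced by a
   continuous observable φ : 𝙰^G → 𝙲, Z is a subshift of full μ-measure, Y = Φ(Z),
   and Φ|_Z is a homeomorphism onto Y, then f^Z_μ(𝙰^G) = f^Y_μ(φ). -/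

open MeasureTheory Filter
open scoped ENNReal NNReal

namespace Stmt2

abbrev G (r : ℕ) : Type := FreeGroup (Fin r)

instance (r : ℕ) : Countable (G r) := FreeGroup.toWord_injective.countable

/-- The left shift action of `G`: `(g·x)(f) = x(g⁻¹ f)`. -/
def shift (r : ℕ) {A : Type} (g : G r) (x : G r → A) : G r → A := fun f => x (g⁻¹ * f)

/-- The equivariant map induced by an observable `φ`: `Φ(x)(g) = φ(g⁻¹·x)`. -/
def Phi (r : ℕ) {A C : Type} (φ : (G r → A) → C) (x : G r → A) : G r → C :=
  fun g => φ (shift r g⁻¹ x)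

/-- The pullback name `x^σ_v(g) = x(σ(g)⁻¹ v)`. -/
def pull (r : ℕ) {n : ℕ} {A : Type} (σ : G r →* Equiv.Perm (Fin n))
    (x : Fin n → A) (v : Fin n) : G r → A :=
  fun g => x ((σ g)⁻¹ v)

/-- The empirical distribution `P^σ_x = (1/n) Σ_v δ_{x^σ_v}` (as a measure). -/
noncomputable def empMeas (r : ℕ) {n : ℕ} {A : Type} [MeasurableSpace A]
    (σ : G r →* Equiv.Perm (Fin n)) (x : Fin n → A) : Measure (G r → A) :=
  (n : ℝ≥0∞)⁻¹ • ∑ v : Fin n, Measure.dirac (pull r σ x v)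

/-- `Ω_Z(σ,𝒪)`. -/
def OmegaZ (r : ℕ) {n : ℕ} {A : Type} [Fintype A] [TopologicalSpace A]
    [DiscreteTopology A] [MeasurableSpace A] [BorelSpace A]
    (Z : Set (G r → A)) (σ : G r →* Equiv.Perm (Fin n))
    (O : Set (ProbabilityMeasure (G r → A))) : Set (Fin n → A) :=
  {x | ∃ h : IsProbabilityMeasure (empMeas r σ x),
    (⟨empMeas r σ x, h⟩ : ProbabilityMeasure (G r → A)) ∈ O ∧ empMeas r σ x Z = 1}

/-- `f^Z_ν(𝙰^G) = inf_{𝒪 ∋ ν} limsup_n (1/n) log E_{σ∼u_n} |Ω_Z(σ,𝒪)|`. -/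
noncomputable def fZ (r : ℕ) {A : Type} [Fintype A] [TopologicalSpace A]
    [DiscreteTopology A] [MeasurableSpace A] [BorelSpace A]
    (ν : ProbabilityMeasure (G r → A)) (Z : Set (G r → A)) : EReal :=
  ⨅ O : {O : Set (ProbabilityMeasure (G r → A)) // IsOpen O ∧ ν ∈ O},
    Filter.limsup (fun n : ℕ =>
      (((n : ℝ)⁻¹ : ℝ) : EReal) *
        ENNReal.log
          ((∑ f : Fin r → Equiv.Perm (Fin n),
            ((OmegaZ r Z (FreeGroup.lift f) O.val).ncard : ℝ≥0∞)) /
            ((n.factorial : ℝ≥0∞)) ^ r))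
      Filter.atTop

/-- A subshift: a closed shift-invariant subset. -/
def IsSubshift (r : ℕ) {A : Type} [TopologicalSpace A] (Z : Set (G r → A)) : Prop :=
  IsClosed Z ∧ ∀ g : G r, shift r g '' Z = Z


variable {A C : Type}

lemma continuous_shift (r : ℕ) [TopologicalSpace A] (g : G r) :
    Continuous (shift r g : (G r → A) → (G r → A)) :=
  continuous_pi fun f => continuous_apply _

lemma continuous_Phi (r : ℕ) [TopologicalSpace A] [TopologicalSpace C]
    {φ : (G r → A) → C} (hφ : Continuous φ) : Continuous (Phi r φ) :=
  continuous_pi fun g => hφ.comp (continuous_shift r g⁻¹)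

lemma shift_shift (r : ℕ) (a b : G r) (x : G r → A) :
    shift r a (shift r b x) = shift r (a * b) x := by
  funext f; simp [shift, mul_assoc]

lemma Phi_shift (r : ℕ) (φ : (G r → A) → C) (h : G r) (z : G r → A) :
    Phi r φ (shift r h z) = shift r h (Phi r φ z) := by
  funext g
  simp [Phi, shift_shift, shift, mul_inv_rev]

lemma pull_one (r : ℕ) {n : ℕ} (σ : G r →* Equiv.Perm (Fin n)) (x : Fin n → A) (v : Fin n) :
    pull r σ x v 1 = x v := by
  simp [pull]

lemma pull_obs (r : ℕ) {n : ℕ} (σ : G r →* Equiv.Perm (Fin n)) (ψ : (G r → A) → C)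
    (x : Fin n → A) (v : Fin n) :
    pull r σ (fun w => ψ (pull r σ x w)) v = Phi r ψ (pull r σ x v) := by
  funext g
  simp only [pull, Phi, shift]
  congr 1
  funext f
  simp [pull, shift, map_mul, mul_inv_rev]

lemma empMeas_apply (r : ℕ) {n : ℕ} [MeasurableSpace A]
    (σ : G r →* Equiv.Perm (Fin n)) (x : Fin n → A) {s : Set (G r → A)}
    (hs : MeasurableSet s) :
    empMeas r σ x s = (n : ℝ≥0∞)⁻¹ * ∑ v : Fin n, s.indicator 1 (pull r σ x v) := by
  simp only [empMeas, Measure.smul_apply, Measure.finset_sum_apply, smul_eq_mul]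
  congr 1
  exact Finset.sum_congr rfl fun v _ => Measure.dirac_apply' _ hs

lemma empMeas_map (r : ℕ) {n : ℕ} [MeasurableSpace A] [MeasurableSpace C]
    (σ : G r →* Equiv.Perm (Fin n)) (ψ : (G r → A) → C) (hψ : Measurable (Phi r ψ))
    (x : Fin n → A) :
    Measure.map (Phi r ψ) (empMeas r σ x) = empMeas r σ (fun w => ψ (pull r σ x w)) := by
  ext s hs
  rw [Measure.map_apply hψ hs, empMeas_apply r σ x (hψ hs), empMeas_apply r σ _ hs]
  congr 1
  refine Finset.sum_congr rfl fun v _ => ?_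
  rw [pull_obs r σ ψ x v]
  by_cases h : Phi r ψ (pull r σ x v) ∈ s
  · simp [Set.indicator, h]
  · simp [Set.indicator, h]

lemma pulls_mem (r : ℕ) {n : ℕ} [MeasurableSpace A]
    (σ : G r →* Equiv.Perm (Fin n)) (x : Fin n → A) {Z : Set (G r → A)}
    (hZm : MeasurableSet Z) (hp : IsProbabilityMeasure (empMeas r σ x))
    (h1 : empMeas r σ x Z = 1) (v : Fin n) : pull r σ x v ∈ Z := by
  have hc : empMeas r σ x Zᶜ = 0 := by
    rw [← prob_compl_eq_zero_iff hZm] at h1; exact h1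
  rw [empMeas_apply r σ x hZm.compl] at hc
  rcases mul_eq_zero.1 hc with h | h
  · exact absurd h (ENNReal.inv_ne_zero.2 (ENNReal.natCast_ne_top n))
  · have := (Finset.sum_eq_zero_iff.1 h) v (Finset.mem_univ v)
    by_contra hv
    rw [Set.indicator_of_mem (Set.mem_compl hv)] at this
    simp at this

lemma fZ_le (r : ℕ)
    [Fintype A] [TopologicalSpace A] [DiscreteTopology A] [MeasurableSpace A] [BorelSpace A]
    [Fintype C] [TopologicalSpace C] [DiscreteTopology C] [MeasurableSpace C] [BorelSpace C]
    (ψ : (G r → A) → C) (hψ : Continuous ψ)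
    (μ : ProbabilityMeasure (G r → A)) (ν : ProbabilityMeasure (G r → C))
    (hν : ν.toMeasure = μ.toMeasure.map (Phi r ψ))
    (Z : Set (G r → A)) (W : Set (G r → C))
    (hZm : MeasurableSet Z) (hWm : MeasurableSet W)
    (hZW : ∀ z ∈ Z, Phi r ψ z ∈ W)
    (hinj : Set.InjOn (Phi r ψ) Z) :
    fZ r μ Z ≤ fZ r ν W := by
  have hcont : Continuous (Phi r ψ) := continuous_Phi r hψ
  have hmeas : Measurable (Phi r ψ) := hcont.measurable
  refine le_iInf fun U => ?_
  obtain ⟨U, hUo, hUm⟩ := U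
  have hmap : ProbabilityMeasure.map μ hcont.measurable.aemeasurable = ν :=
    Subtype.ext hν.symm
  set O : Set (ProbabilityMeasure (G r → A)) :=
    (fun P => P.map hcont.measurable.aemeasurable) ⁻¹' U with hO
  have hOo : IsOpen O := hUo.preimage (ProbabilityMeasure.continuous_map hcont)
  have hOmem : μ ∈ O := by
    simp only [hO, Set.mem_preimage, hmap]; exact hUm
  refine le_trans (iInf_le _ ⟨O, hOo, hOmem⟩) ?_
  refine Filter.limsup_le_limsup (Filter.Eventually.of_forall fun n => ?_)
  refine mul_le_mul_of_nonneg_left ?_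
    (EReal.coe_nonneg.2 (inv_nonneg.2 (Nat.cast_nonneg n)))
  refine ENNReal.log_monotone ?_
  refine ENNReal.div_le_div_right ?_ _
  refine Finset.sum_le_sum fun f _ => ?_
  set σ := (FreeGroup.lift f : G r →* Equiv.Perm (Fin n))
  set F : (Fin n → A) → (Fin n → C) := fun x w => ψ (pull r σ x w) with hF
  have himg : F '' OmegaZ r Z σ O ⊆ OmegaZ r W σ U := by
    rintro - ⟨x, ⟨hp, hOx, hZ1⟩, rfl⟩
    have hmapP : empMeas r σ (F x) = Measure.map (Phi r ψ) (empMeas r σ x) :=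
      (empMeas_map r σ ψ hmeas x).symm
    have hp' : IsProbabilityMeasure (empMeas r σ (F x)) := by
      rw [hmapP]; exact MeasureTheory.Measure.isProbabilityMeasure_map hmeas.aemeasurable
    haveI := hp'
    refine ⟨hp', ?_, ?_⟩
    · have heq : (⟨empMeas r σ (F x), hp'⟩ : ProbabilityMeasure _) =
        ProbabilityMeasure.map (⟨empMeas r σ x, hp⟩ : ProbabilityMeasure _)
          hcont.measurable.aemeasurable :=
        Subtype.ext hmapP
      rw [heq]; exact hOx
    · rw [hmapP, Measure.map_apply hmeas hWm]
      refine le_antisymm prob_le_one ?_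
      calc (1 : ℝ≥0∞) = empMeas r σ x Z := hZ1.symm
        _ ≤ empMeas r σ x (Phi r ψ ⁻¹' W) := measure_mono fun z hz => hZW z hz
  have hinjF : Set.InjOn F (OmegaZ r Z σ O) := by
    rintro x ⟨hp, -, hZ1⟩ x' ⟨hp', -, hZ1'⟩ hFF
    funext v
    have h1 : pull r σ x v = pull r σ x' v := by
      apply hinj (pulls_mem r σ x hZm hp hZ1 v) (pulls_mem r σ x' hZm hp' hZ1' v)
      rw [← pull_obs r σ ψ x v, ← pull_obs r σ ψ x' v]
      simp only [hF] at hFF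
      rw [hFF]
    have h2 := congrFun h1 1
    rwa [pull_one, pull_one] at h2
  have key : (OmegaZ r Z σ O).ncard ≤ (OmegaZ r W σ U).ncard := by
    calc (OmegaZ r Z σ O).ncard = (F '' OmegaZ r Z σ O).ncard :=
          (Set.ncard_image_of_injOn hinjF).symm
      _ ≤ (OmegaZ r W σ U).ncard := Set.ncard_le_ncard himg (Set.toFinite _)
  exact_mod_cast Nat.cast_le.2 key

lemma exists_theta (r : ℕ)
    [Fintype A] [TopologicalSpace A] [DiscreteTopology A]
    [Fintype C] [TopologicalSpace C] [DiscreteTopology C]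
    (hA : Nonempty A)
    (φ : (G r → A) → C) (hφ : Continuous φ)
    (Z : Set (G r → A)) (hZc : IsClosed Z)
    (hhomeo : Topology.IsEmbedding (fun z : Z => Phi r φ z.val)) :
    ∃ θ : (G r → C) → A, Continuous θ ∧ ∀ z ∈ Z, θ (Phi r φ z) = z 1 := by
  classical
  set e : Z → (G r → C) := fun z => Phi r φ z.val with he
  have hYcomp : IsCompact (Phi r φ '' Z) :=
    (hZc.isCompact).image (continuous_Phi r hφ)
  have hstep : ∀ y : Phi r φ '' Z, ∃ U : Set (G r → C), IsClopen U ∧ (y : G r → C) ∈ U ∧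
      ∃ a : A, ∀ z ∈ Z, Phi r φ z ∈ U → z 1 = a := by
    rintro ⟨y, z₀, hz₀, rfl⟩
    have hSopen : IsOpen {z : Z | z.val 1 = z₀ 1} := by
      have hc : Continuous (fun z : Z => z.val 1) :=
        (continuous_apply (1 : G r)).comp continuous_subtype_val
      have : {z : Z | z.val 1 = z₀ 1} = (fun z : Z => z.val 1) ⁻¹' {z₀ 1} := rfl
      rw [this]
      exact (isOpen_discrete _).preimage hc
    rw [hhomeo.toIsInducing.isOpen_iff] at hSopen
    obtain ⟨V, hVo, hVe⟩ := hSopen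
    have hy₀V : Phi r φ z₀ ∈ V := by
      have h0 : (⟨z₀, hz₀⟩ : Z) ∈ e ⁻¹' V := by
        rw [hVe]; exact rfl
      exact h0
    obtain ⟨U, hUc, hUm, hUV⟩ := compact_exists_isClopen_in_isOpen hVo hy₀V
    refine ⟨U, hUc, hUm, z₀ 1, fun z hz hzU => ?_⟩
    have h1 : (⟨z, hz⟩ : Z) ∈ e ⁻¹' V := hUV hzU
    rw [hVe] at h1
    exact h1
  choose U hUclopen hUmem a ha using hstep
  obtain ⟨t, ht⟩ := hYcomp.elim_finite_subcover U (fun y => (hUclopen y).2)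
    (fun p hp => Set.mem_iUnion.2 ⟨⟨p, hp⟩, hUmem _⟩)
  haveI : Finite (↥t) := inferInstance
  set c : (G r → C) → (↥t → Bool) := fun p i => decide (p ∈ U i.val) with hc
  set g : (↥t → Bool) → A := fun b =>
    if h : ∃ i : ↥t, b i = true then a (h.choose).val else hA.some with hg
  refine ⟨g ∘ c, ?_, ?_⟩
  · refine Continuous.comp ?_ ?_
    · exact continuous_of_discreteTopology
    · refine continuous_pi fun i => ?_
      have hpre : (fun p => decide (p ∈ U i.val)) ⁻¹' {true} = U i.val := by
        ext p; simp
      exact (continuous_bool_rng true).2 (hpre ▸ hUclopen i.val)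
  · intro z hz
    have hmem : Phi r φ z ∈ ⋃ i ∈ t, U i := ht ⟨z, hz, rfl⟩
    obtain ⟨i, hit, hiU⟩ := Set.mem_iUnion₂.1 hmem
    have hex : ∃ j : ↥t, c (Phi r φ z) j = true := ⟨⟨i, hit⟩, by simp [hc, hiU]⟩
    have : (g ∘ c) (Phi r φ z) = a (hex.choose).val := by
      simp only [hg, Function.comp_apply, dif_pos hex]
    rw [this]
    have hch : c (Phi r φ z) hex.choose = true := hex.choose_spec
    have hU : Phi r φ z ∈ U (hex.choose).val := by
      simpa [hc] using hch
    exact (ha (hex.choose).val z hz hU).symm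

/-- Claim `C:restricted_invar`. -/
theorem statement2 (r : ℕ) (hr : 1 ≤ r) {A C : Type}
    [Fintype A] [TopologicalSpace A] [DiscreteTopology A] [MeasurableSpace A]
    [BorelSpace A]
    [Fintype C] [TopologicalSpace C] [DiscreteTopology C] [MeasurableSpace C]
    [BorelSpace C]
    (φ : (G r → A) → C) (hφ : Continuous φ)
    (μ : ProbabilityMeasure (G r → A))
    (hinv : ∀ g : G r, μ.toMeasure.map (shift r g) = μ.toMeasure)
    (Z : Set (G r → A)) (hZ : IsSubshift r Z) (hμZ : μ.toMeasure Z = 1)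
    (Y : Set (G r → C)) (hY : Y = Phi r φ '' Z)
    (hhomeo : Topology.IsEmbedding (fun z : Z => Phi r φ z.val))
    (ν : ProbabilityMeasure (G r → C))
    (hν : ν.toMeasure = μ.toMeasure.map (Phi r φ)) :
    fZ r μ Z = fZ r ν Y := by
  have hne : Nonempty (G r → A) := by
    by_contra h
    rw [not_nonempty_iff] at h
    have h1 : μ.toMeasure Set.univ = 1 := measure_univ
    rw [Set.univ_eq_empty_iff.mpr h, measure_empty] at h1
    exact one_ne_zero h1.symm
  have hA : Nonempty A := ⟨hne.some 1⟩
  have hZm : MeasurableSet Z := hZ.1.measurableSet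
  have hYcomp : IsCompact Y := by
    rw [hY]; exact hZ.1.isCompact.image (continuous_Phi r hφ)
  have hYm : MeasurableSet Y := hYcomp.isClosed.measurableSet
  have hinjΦ : Set.InjOn (Phi r φ) Z := by
    intro x hx x' hx' hxy
    have h1 : (⟨x, hx⟩ : Z) = ⟨x', hx'⟩ :=
      hhomeo.injective (show Phi r φ ((⟨x, hx⟩ : Z) : G r → A) =
        Phi r φ ((⟨x', hx'⟩ : Z) : G r → A) from hxy)
    exact congrArg Subtype.val h1
  obtain ⟨θ, hθc, hθ⟩ := exists_theta r hA φ hφ Z hZ.1 hhomeo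
  have hPhiTheta : ∀ z ∈ Z, Phi r θ (Phi r φ z) = z := by
    intro z hz
    funext g
    have hzg : shift r g⁻¹ z ∈ Z := by
      rw [← hZ.2 g⁻¹]; exact ⟨z, hz, rfl⟩
    calc Phi r θ (Phi r φ z) g = θ (shift r g⁻¹ (Phi r φ z)) := rfl
      _ = θ (Phi r φ (shift r g⁻¹ z)) := by rw [Phi_shift]
      _ = (shift r g⁻¹ z) 1 := hθ _ hzg
      _ = z g := by simp [shift]
  have le1 : fZ r μ Z ≤ fZ r ν Y :=
    fZ_le r φ hφ μ ν hν Z Y hZm hYm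
      (fun z hz => hY ▸ Set.mem_image_of_mem _ hz) hinjΦ
  have hYZ : ∀ y ∈ Y, Phi r θ y ∈ Z := by
    intro y hy
    rw [hY] at hy
    obtain ⟨z, hz, rfl⟩ := hy
    rw [hPhiTheta z hz]; exact hz
  have hinjθ : Set.InjOn (Phi r θ) Y := by
    intro y hy y' hy' hh
    rw [hY] at hy hy'
    obtain ⟨z, hz, rfl⟩ := hy
    obtain ⟨z', hz', rfl⟩ := hy'
    rw [hPhiTheta z hz, hPhiTheta z' hz'] at hh
    rw [hh]
  have hμν : μ.toMeasure = ν.toMeasure.map (Phi r θ) := by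
    rw [hν, Measure.map_map (continuous_Phi r hθc).measurable
      (continuous_Phi r hφ).measurable]
    have hae : (Phi r θ ∘ Phi r φ) =ᵐ[μ.toMeasure] id := by
      have hZc : μ.toMeasure Zᶜ = 0 := (prob_compl_eq_zero_iff hZm).2 hμZ
      exact Filter.eventuallyEq_of_mem (by rwa [mem_ae_iff])
        (fun x hx => hPhiTheta x hx)
    rw [Measure.map_congr hae, Measure.map_id]
  have le2 : fZ r ν Y ≤ fZ r μ Z :=
    fZ_le r θ hθc ν μ hμν Y Z hYm hZm hYZ hinjθ
  exact le_antisymm le1 le2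

end Stmt2
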